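/- arXiv:1805.05626 — 2 statements merged into one kernel-verified Lean document; each statement's English description precedes it below -/
import Mathlib

section
/- Let P and Q be two distinct points of 𝔽_q² and let i, j be integers with 0 ≤ i, j ≤ q+1. Then the probability, with respect to the uniform measure on Ω, that P has multiplicity i and Q has multiplicity j is P{M_P = i and M_Q = j} = [ (q! / ((i−1)!(j−1)!(q−i−j+2)!))·(q−2)^{q−i−j+2} + (q! / (i! j! (q−i−j)!))·(q−1)·(q−2)^{q−i−j} ] / q^{q+1}, where a multinomial coefficient is taken to be 0 whenever one of its lower arguments is negative (the first summand corresponds to the line (PQ) belonging to the arrangement, the second to it not belonging). -/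
open Finset

/-- `memLine s c P` says that the point `P ∈ 𝔽_q²` lies on the line `l(s, c)`:
for `s = some m` (slope `m ∈ 𝔽_q`) this is the line `y = m·x + c`,
and for `s = none` (slope `∞`) this is the vertical line `x = c`. -/
def memLine {F : Type*} [Field F] (s : Option F) (c : F) (P : F × F) : Prop :=
  match s with
  | none => P.1 = c
  | some m => P.2 = m * P.1 + c

instance {F : Type*} [Field F] [DecidableEq F] :
    ∀ (s : Option F) (c : F) (P : F × F), Decidable (memLine s c P)
  | none, c, P => inferInstanceAs (Decidable (P.1 = c))
  | some m, c, P => inferInstanceAs (Decidable (P.2 = m * P.1 + c))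

/-- The multiplicity of the point `P` in the minimal Besicovitch arrangement
`B = ⋃_{i ∈ 𝔽_q ∪ {∞}} l(i, b i)` determined by `b : 𝔽_q ∪ {∞} → 𝔽_q`,
i.e. the number of slopes `i` with `P ∈ l(i, b i)`. -/
def multPt {F : Type*} [Field F] [Fintype F] [DecidableEq F]
    (b : Option F → F) (P : F × F) : ℕ :=
  (Finset.univ.filter fun i : Option F => memLine i (b i) P).card

/-- `xCount b m` is `x_m^B`: the number of points of `𝔽_q²` of multiplicity
exactly `m` in the minimal Besicovitch arrangement determined by `b`. -/
def xCount {F : Type*} [Field F] [Fintype F] [DecidableEq F]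
    (b : Option F → F) (m : ℕ) : ℕ :=
  (Finset.univ.filter fun P : F × F => multPt b P = m).card

/-- The multinomial coefficient `n! / (a! b! c!)`, taken to be `0` whenever one of the
lower arguments `a`, `b`, `c` is (strictly) negative. -/
def multinom (n : ℕ) (a b c : ℤ) : ℕ :=
  if 0 ≤ a ∧ 0 ≤ b ∧ 0 ≤ c then
    n.factorial / (a.toNat.factorial * b.toNat.factorial * c.toNat.factorial)
  else 0

section Core
variable {α F : Type*} [Fintype α] [DecidableEq α] [Fintype F] [DecidableEq F]

lemma fiber_count (f g : α → F) (hfg : ∀ s, f s ≠ g s) (A B : Finset α)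
    (hAB : Disjoint A B) :
    (univ.filter fun b : α → F =>
        (univ.filter fun s => b s = f s) = A ∧ (univ.filter fun s => b s = g s) = B).card
      = (Fintype.card F - 2) ^ (Fintype.card α - A.card - B.card) := by
  classical
  set t : α → Finset F := fun s =>
    if s ∈ A then {f s} else if s ∈ B then {g s} else Finset.univ \ {f s, g s} with ht
  have hset : (univ.filter fun b : α → F =>
        (univ.filter fun s => b s = f s) = A ∧ (univ.filter fun s => b s = g s) = B)
      = Fintype.piFinset t := by
    ext b
    simp only [mem_filter, mem_univ, true_and, Fintype.mem_piFinset, ht]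
    constructor
    · rintro ⟨hA, hB⟩ s
      by_cases hsA : s ∈ A
      · have : b s = f s := by
          have := hA ▸ hsA; simpa using (Finset.mem_filter.1 this).2
        simp [hsA, this]
      · by_cases hsB : s ∈ B
        · have : b s = g s := by
            have := hB ▸ hsB; simpa using (Finset.mem_filter.1 this).2
          simp [hsA, hsB, this]
        · have h1 : b s ≠ f s := fun h => hsA (hA ▸ (by simp [h]))
          have h2 : b s ≠ g s := fun h => hsB (hB ▸ (by simp [h]))
          simp [hsA, hsB, h1, h2]
    · intro h
      constructor
      · ext s
        simp only [mem_filter, mem_univ, true_and]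
        have := h s
        by_cases hsA : s ∈ A
        · simp [hsA] at this ⊢; exact this
        · by_cases hsB : s ∈ B
          · simp [hsA, hsB] at this ⊢
            rw [this]; exact fun hh => (hfg s hh.symm).elim
          · simp [hsA, hsB] at this ⊢
            exact fun hh => (this.1 hh).elim
      · ext s
        simp only [mem_filter, mem_univ, true_and]
        have := h s
        by_cases hsA : s ∈ A
        · simp [hsA] at this ⊢
          rw [this]
          exact ⟨fun hh => (hfg s hh).elim, fun hh => (Finset.disjoint_left.1 hAB hsA hh).elim⟩
        · by_cases hsB : s ∈ B
          · simp [hsA, hsB] at this ⊢; exact this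
          · simp [hsA, hsB] at this ⊢
            exact fun hh => (this.2 hh).elim
  rw [hset, Fintype.card_piFinset]
  have hcard : ∀ s, (t s).card = if s ∈ A ∪ B then 1 else Fintype.card F - 2 := by
    intro s
    by_cases hsA : s ∈ A
    · simp [ht, hsA]
    · by_cases hsB : s ∈ B
      · simp [ht, hsA, hsB]
      · have hpair : ({f s, g s} : Finset F).card = 2 := by
          rw [Finset.card_insert_of_notMem (by simp [hfg s]), Finset.card_singleton]
        simp only [ht, hsA, hsB, if_false, mem_union, or_self]
        rw [Finset.card_sdiff_of_subset (by simp), hpair, Finset.card_univ]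
  calc ∏ s, (t s).card = ∏ s, if s ∈ A ∪ B then 1 else Fintype.card F - 2 := by
        exact Finset.prod_congr rfl fun s _ => hcard s
    _ = (Fintype.card F - 2) ^ (Fintype.card α - A.card - B.card) := by
        rw [Finset.prod_ite, Finset.prod_const_one, one_mul, Finset.prod_const]
        have h1 : univ.filter (fun s => ¬ s ∈ A ∪ B) = (A ∪ B)ᶜ := by ext; simp
        rw [h1, Finset.card_compl, Finset.card_union_of_disjoint hAB, Nat.sub_sub]

lemma core_count (f g : α → F) (hfg : ∀ s, f s ≠ g s) (a c : ℕ) :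
    (univ.filter fun b : α → F =>
        (univ.filter fun s => b s = f s).card = a ∧ (univ.filter fun s => b s = g s).card = c).card
      = (Fintype.card α).choose a * ((Fintype.card α) - a).choose c *
        (Fintype.card F - 2) ^ (Fintype.card α - a - c) := by
  classical
  set T : Finset (Finset α × Finset α) :=
    ((powersetCard a (univ : Finset α)) ×ˢ (powersetCard c (univ : Finset α))).filter
      (fun p => Disjoint p.1 p.2) with hT
  have hmap : ∀ b ∈ (univ.filter fun b : α → F =>
        (univ.filter fun s => b s = f s).card = a ∧ (univ.filter fun s => b s = g s).card = c),
      ((univ.filter fun s => b s = f s), (univ.filter fun s => b s = g s)) ∈ T := by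
    intro b hb
    simp only [mem_filter, mem_univ, true_and] at hb
    simp only [hT, mem_filter, mem_product, mem_powersetCard]
    refine ⟨⟨⟨subset_univ _, hb.1⟩, ⟨subset_univ _, hb.2⟩⟩, ?_⟩
    rw [Finset.disjoint_left]
    intro s hs1 hs2
    simp only [mem_filter] at hs1 hs2
    exact hfg s (hs1.2 ▸ hs2.2)
  rw [Finset.card_eq_sum_card_fiberwise hmap]
  have hfib : ∀ p ∈ T, ((univ.filter fun b : α → F =>
        (univ.filter fun s => b s = f s).card = a ∧ (univ.filter fun s => b s = g s).card = c).filter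
        (fun b => ((univ.filter fun s => b s = f s), (univ.filter fun s => b s = g s)) = p)).card
      = (Fintype.card F - 2) ^ (Fintype.card α - a - c) := by
    intro p hp
    simp only [hT, mem_filter, mem_product, mem_powersetCard] at hp
    obtain ⟨⟨⟨-, ha⟩, ⟨-, hc⟩⟩, hdisj⟩ := hp
    have : ((univ.filter fun b : α → F =>
        (univ.filter fun s => b s = f s).card = a ∧ (univ.filter fun s => b s = g s).card = c).filter
        (fun b => ((univ.filter fun s => b s = f s), (univ.filter fun s => b s = g s)) = p))
      = (univ.filter fun b : α → F =>
        (univ.filter fun s => b s = f s) = p.1 ∧ (univ.filter fun s => b s = g s) = p.2) := by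
      ext b
      simp only [mem_filter, mem_univ, true_and, Prod.ext_iff]
      constructor
      · rintro ⟨-, h1, h2⟩; exact ⟨h1, h2⟩
      · rintro ⟨h1, h2⟩
        exact ⟨⟨h1 ▸ ha, h2 ▸ hc⟩, h1, h2⟩
    rw [this, fiber_count f g hfg p.1 p.2 hdisj, ha, hc]
  rw [Finset.sum_congr rfl hfib, Finset.sum_const, smul_eq_mul]
  congr 1
  -- card of T
  have hmap2 : ∀ p ∈ T, p.1 ∈ powersetCard a (univ : Finset α) := by
    intro p hp
    simp only [hT, mem_filter, mem_product] at hp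
    exact hp.1.1
  rw [Finset.card_eq_sum_card_fiberwise hmap2]
  have hfib2 : ∀ A ∈ powersetCard a (univ : Finset α),
      (T.filter fun p => p.1 = A).card = ((Fintype.card α) - a).choose c := by
    intro A hA
    have hAcard : A.card = a := (Finset.mem_powersetCard.1 hA).2
    have : (T.filter fun p => p.1 = A) = {A} ×ˢ powersetCard c (univ \ A) := by
      ext p
      simp only [hT, mem_filter, mem_product, mem_powersetCard, mem_singleton,
        Finset.subset_sdiff]
      constructor
      · rintro ⟨⟨⟨-, hsub2⟩, hdisj⟩, h1A⟩
        exact ⟨h1A, ⟨hsub2.1, (h1A ▸ hdisj.symm : Disjoint p.2 A)⟩, hsub2.2⟩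
      · rintro ⟨h1A, ⟨hsub2, hdisj2⟩, h2c⟩
        exact ⟨⟨⟨⟨subset_univ _, h1A ▸ hAcard⟩, hsub2, h2c⟩,
          (h1A ▸ hdisj2.symm : Disjoint p.1 p.2)⟩, h1A⟩
    rw [this, Finset.card_product, Finset.card_singleton, one_mul, Finset.card_powersetCard,
      Finset.card_sdiff_of_subset (subset_univ A), Finset.card_univ, hAcard]
  rw [Finset.sum_congr rfl hfib2, Finset.sum_const, smul_eq_mul, Finset.card_powersetCard,
    Finset.card_univ]

lemma card_filter_erase {β : Type*} [Fintype β] [DecidableEq β] (s₀ : β)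
    (p : β → Prop) [DecidablePred p] :
    (univ.filter p).card
      = (if p s₀ then 1 else 0) + ((univ : Finset {s : β // s ≠ s₀}).filter fun s => p s.1).card := by
  classical
  have h1 : (((univ : Finset {s : β // s ≠ s₀}).filter fun s => p s.1)).card
      = (((univ : Finset β).erase s₀).filter p).card := by
    apply Finset.card_bij (fun s _ => s.1)
    · intro a ha
      simp only [mem_filter, mem_univ, true_and] at ha
      simp [a.2, ha]
    · intro a _ b _ h
      exact Subtype.ext h
    · intro t ht
      simp only [mem_filter, mem_erase] at ht
      exact ⟨⟨t, ht.1.1⟩, by simp [ht.2], rfl⟩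
  rw [show (univ : Finset β) = insert s₀ ((univ : Finset β).erase s₀) from
    (Finset.insert_erase (mem_univ s₀)).symm, Finset.filter_insert, h1]
  split_ifs with h
  · rw [Finset.card_insert_of_notMem (fun hc => (Finset.mem_erase.1 (Finset.mem_of_mem_filter _ hc)).1 rfl)]
    omega
  · omega

lemma card_fiber {β : Type*} [Fintype β] [DecidableEq β] [Fintype F] [DecidableEq F]
    (s₀ : β) (v : F) (p : (β → F) → Prop) [DecidablePred p] :
    (univ.filter fun b : β → F => p b ∧ b s₀ = v).card
      = (univ.filter fun b' : {s : β // s ≠ s₀} → F =>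
          p (fun s => if h : s = s₀ then v else b' ⟨s, h⟩)).card := by
  classical
  apply Finset.card_bij' (fun b _ => fun s : {s : β // s ≠ s₀} => b s.1)
    (fun b' _ => fun s => if h : s = s₀ then v else b' ⟨s, h⟩)
  · intro b hb
    simp only [mem_filter, mem_univ, true_and] at hb ⊢
    have : (fun s => if h : s = s₀ then v else b s) = b := by
      funext s
      split_ifs with h
      · rw [h]; exact hb.2.symm
      · rfl
    rw [this]
    exact hb.1
  · intro b' hb'
    simp only [mem_filter, mem_univ, true_and] at hb' ⊢
    refine ⟨?_, by simp⟩
    exact hb'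
  · intro b hb
    simp only [mem_filter, mem_univ, true_and] at hb
    funext s
    split_ifs with h
    · rw [h]; exact hb.2.symm
    · rfl
  · intro b' _
    funext s
    simp [s.2]

set_option maxHeartbeats 1000000 in
lemma split_count {β : Type*} [Fintype β] [DecidableEq β] (s₀ : β) (f g : β → F)
    (hfg : ∀ s, f s = g s ↔ s = s₀) (i j : ℕ) :
    (univ.filter fun b : β → F =>
        (univ.filter fun s => b s = f s).card = i ∧ (univ.filter fun s => b s = g s).card = j).card
      = (if i = 0 ∨ j = 0 then 0 else
          (Fintype.card {s : β // s ≠ s₀}).choose (i-1) *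
          ((Fintype.card {s : β // s ≠ s₀}) - (i-1)).choose (j-1) *
          (Fintype.card F - 2) ^ ((Fintype.card {s : β // s ≠ s₀}) - (i-1) - (j-1)))
        + (Fintype.card F - 1) *
          ((Fintype.card {s : β // s ≠ s₀}).choose i *
           ((Fintype.card {s : β // s ≠ s₀}) - i).choose j *
           (Fintype.card F - 2) ^ ((Fintype.card {s : β // s ≠ s₀}) - i - j)) := by
  classical
  have hfg0 : f s₀ = g s₀ := (hfg s₀).2 rfl
  have hne : ∀ s : {s : β // s ≠ s₀}, f s.1 ≠ g s.1 := fun s h => s.2 ((hfg s.1).1 h)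
  have hmap : ∀ b ∈ (univ.filter fun b : β → F =>
      (univ.filter fun s => b s = f s).card = i ∧ (univ.filter fun s => b s = g s).card = j),
      b s₀ ∈ (univ : Finset F) := fun _ _ => mem_univ _
  rw [Finset.card_eq_sum_card_fiberwise hmap]
  have key : ∀ v : F, ((univ.filter fun b : β → F =>
      (univ.filter fun s => b s = f s).card = i ∧ (univ.filter fun s => b s = g s).card = j).filter
      (fun b => b s₀ = v)).card
      = if v = f s₀ then (if i = 0 ∨ j = 0 then 0 else
          (Fintype.card {s : β // s ≠ s₀}).choose (i-1) *
          ((Fintype.card {s : β // s ≠ s₀}) - (i-1)).choose (j-1) *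
          (Fintype.card F - 2) ^ ((Fintype.card {s : β // s ≠ s₀}) - (i-1) - (j-1)))
        else ((Fintype.card {s : β // s ≠ s₀}).choose i *
           ((Fintype.card {s : β // s ≠ s₀}) - i).choose j *
           (Fintype.card F - 2) ^ ((Fintype.card {s : β // s ≠ s₀}) - i - j)) := by
    intro v
    rw [Finset.filter_filter, card_fiber s₀ v]
    have e1 : ∀ (h : β → F) (b' : {s : β // s ≠ s₀} → F),
        (univ.filter fun s => (if hs : s = s₀ then v else b' ⟨s, hs⟩) = h s).card
          = (if v = h s₀ then 1 else 0)
            + (univ.filter fun s : {s : β // s ≠ s₀} => b' s = h s.1).card := by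
      intro h b'
      rw [card_filter_erase s₀ (fun s => (if hs : s = s₀ then v else b' ⟨s, hs⟩) = h s)]
      congr 1
      · simp
      · apply congrArg
        apply Finset.filter_congr
        intro s _
        simp [s.2]
    by_cases hv : v = f s₀
    · rw [if_pos hv]
      by_cases hij : i = 0 ∨ j = 0
      · rw [if_pos hij]
        rw [Finset.card_eq_zero, Finset.filter_eq_empty_iff]
        intro b' _
        rw [e1 f b', e1 g b', if_pos hv, if_pos (hv.trans hfg0)]
        omega
      · rw [if_neg hij]
        push_neg at hij
        have : ∀ b' : {s : β // s ≠ s₀} → F,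
            ((univ.filter fun s => (if hs : s = s₀ then v else b' ⟨s, hs⟩) = f s).card = i ∧
             (univ.filter fun s => (if hs : s = s₀ then v else b' ⟨s, hs⟩) = g s).card = j)
            ↔ ((univ.filter fun s : {s : β // s ≠ s₀} => b' s = f s.1).card = i - 1 ∧
               (univ.filter fun s : {s : β // s ≠ s₀} => b' s = g s.1).card = j - 1) := by
          intro b'
          rw [e1 f b', e1 g b', if_pos hv, if_pos (hv.trans hfg0)]
          omega
        have hset : (univ.filter fun b' : {s : β // s ≠ s₀} → F =>
            (univ.filter fun s => (if hs : s = s₀ then v else b' ⟨s, hs⟩) = f s).card = i ∧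
            (univ.filter fun s => (if hs : s = s₀ then v else b' ⟨s, hs⟩) = g s).card = j)
            = (univ.filter fun b' : {s : β // s ≠ s₀} → F =>
            (univ.filter fun s : {s : β // s ≠ s₀} => b' s = f s.1).card = i - 1 ∧
            (univ.filter fun s : {s : β // s ≠ s₀} => b' s = g s.1).card = j - 1) := by
          ext b'
          simp only [Finset.mem_filter, Finset.mem_univ, true_and]
          exact this b'
        rw [hset]
        exact core_count (fun s : {s : β // s ≠ s₀} => f s.1) (fun s : {s : β // s ≠ s₀} => g s.1) hne (i-1) (j-1)
    · rw [if_neg hv]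
      have hv2 : ¬ v = g s₀ := hfg0 ▸ hv
      have : ∀ b' : {s : β // s ≠ s₀} → F,
          ((univ.filter fun s => (if hs : s = s₀ then v else b' ⟨s, hs⟩) = f s).card = i ∧
           (univ.filter fun s => (if hs : s = s₀ then v else b' ⟨s, hs⟩) = g s).card = j)
          ↔ ((univ.filter fun s : {s : β // s ≠ s₀} => b' s = f s.1).card = i ∧
             (univ.filter fun s : {s : β // s ≠ s₀} => b' s = g s.1).card = j) := by
        intro b'
        rw [e1 f b', e1 g b', if_neg hv, if_neg hv2]
        omega
      have hset : (univ.filter fun b' : {s : β // s ≠ s₀} → F =>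
          (univ.filter fun s => (if hs : s = s₀ then v else b' ⟨s, hs⟩) = f s).card = i ∧
          (univ.filter fun s => (if hs : s = s₀ then v else b' ⟨s, hs⟩) = g s).card = j)
          = (univ.filter fun b' : {s : β // s ≠ s₀} → F =>
          (univ.filter fun s : {s : β // s ≠ s₀} => b' s = f s.1).card = i ∧
          (univ.filter fun s : {s : β // s ≠ s₀} => b' s = g s.1).card = j) := by
        ext b'
        simp only [Finset.mem_filter, Finset.mem_univ, true_and]
        exact this b'
      rw [hset]
      exact core_count (fun s : {s : β // s ≠ s₀} => f s.1) (fun s : {s : β // s ≠ s₀} => g s.1) hne i j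
  rw [Finset.sum_congr rfl (fun v _ => key v), Finset.sum_ite, Finset.sum_const,
    Finset.sum_const, smul_eq_mul, smul_eq_mul]
  have h1 : (univ.filter fun v : F => v = f s₀) = {f s₀} := by
    ext v; simp
  have h2 : (univ.filter fun v : F => ¬ v = f s₀) = univ.erase (f s₀) := by
    ext v; simp [eq_comm]  -- check
  rw [h1, h2, Finset.card_singleton, Finset.card_erase_of_mem (mem_univ _), Finset.card_univ,
    one_mul]

end Core

def cLine {F : Type*} [Field F] (P : F × F) : Option F → F
  | none => P.1
  | some m => P.2 - m * P.1

lemma memLine_iff {F : Type*} [Field F] (P : F × F) (s : Option F) (c : F) :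
    memLine s c P ↔ c = cLine P s := by
  cases s with
  | none => simp [memLine, cLine, eq_comm]
  | some m =>
    simp only [memLine, cLine]
    constructor
    · intro h; rw [h]; ring
    · intro h; rw [h]; ring

def slopeOf {F : Type*} [Field F] [DecidableEq F] (P Q : F × F) : Option F :=
  if P.1 = Q.1 then none else some ((P.2 - Q.2) / (P.1 - Q.1))

lemma cLine_eq_iff {F : Type*} [Field F] [DecidableEq F] {P Q : F × F} (hPQ : P ≠ Q)
    (s : Option F) : cLine P s = cLine Q s ↔ s = slopeOf P Q := by
  unfold slopeOf
  by_cases h : P.1 = Q.1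
  · rw [if_pos h]
    cases s with
    | none => simp [cLine, h]
    | some m =>
      simp only [cLine]
      constructor
      · intro he
        exfalso
        apply hPQ
        have h2 : P.2 = Q.2 := by
          have h3 : P.2 - m * P.1 = Q.2 - m * Q.1 := he
          rw [h] at h3
          linear_combination h3
        exact Prod.ext h h2
      · intro hc; exact absurd hc (by simp)
  · rw [if_neg h]
    have hsub : P.1 - Q.1 ≠ 0 := sub_ne_zero.2 h
    cases s with
    | none => simp [cLine, h]
    | some m =>
      simp only [cLine, Option.some.injEq]
      rw [eq_div_iff hsub]
      constructor
      · intro he; linear_combination -he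
      · intro he; linear_combination -he

lemma cast_key (q : ℕ) (hq2 : 2 ≤ q) (a b : ℕ) :
    ((q.choose a * (q - a).choose b * (q - 2) ^ (q - a - b) : ℕ) : ℝ)
      = (multinom q a b ((q : ℤ) - a - b) : ℝ) * ((q : ℝ) - 2) ^ ((q : ℤ) - a - b) := by
  by_cases h : a + b ≤ q
  · have he : ((q : ℤ) - a - b) = ((q - a - b : ℕ) : ℤ) := by omega
    have hm : multinom q a b ((q : ℤ) - a - b) = q.choose a * (q - a).choose b := by
      rw [multinom, if_pos ⟨Int.natCast_nonneg a, Int.natCast_nonneg b, by omega⟩]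
      have h1 : ((a : ℤ)).toNat = a := Int.toNat_natCast a
      have h2 : ((b : ℤ)).toNat = b := Int.toNat_natCast b
      have h3 : ((q : ℤ) - a - b).toNat = q - a - b := by omega
      rw [h1, h2, h3]
      have e1 := Nat.choose_mul_factorial_mul_factorial (show a ≤ q by omega)
      have e2 := Nat.choose_mul_factorial_mul_factorial (show b ≤ q - a by omega)
      have e3 : q.factorial = (q.choose a * (q - a).choose b) *
          (a.factorial * b.factorial * (q - a - b).factorial) := by
        rw [← e1, ← e2]; ring
      rw [e3, Nat.mul_div_cancel]
      positivity
    rw [hm, he, zpow_natCast]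
    have hb : ((q - 2 : ℕ) : ℝ) = (q : ℝ) - 2 := by
      rw [Nat.cast_sub hq2]; norm_num
    push_cast [← hb]
    ring
  · have hz : q.choose a * (q - a).choose b = 0 := by
      rcases le_or_gt a q with h' | h'
      · rw [Nat.choose_eq_zero_of_lt (show q - a < b by omega), mul_zero]
      · rw [Nat.choose_eq_zero_of_lt h', zero_mul]
    have hm : multinom q a b ((q : ℤ) - a - b) = 0 := by
      rw [multinom, if_neg]
      rintro ⟨-, -, h3⟩
      omega
    rw [hm, hz]
    simp

/-- For distinct points `P ≠ Q` of `𝔽_q²` and `0 ≤ i, j ≤ q+1`, the probability (w.r.t. the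
uniform measure on `Ω`, which assigns mass `q^{-(q+1)}` to each arrangement) that `P` has
multiplicity `i` and `Q` has multiplicity `j` is
`[ (q!/((i−1)!(j−1)!(q−i−j+2)!))·(q−2)^{q−i−j+2} + (q!/(i!j!(q−i−j)!))·(q−1)·(q−2)^{q−i−j} ] / q^{q+1}`,
multinomial coefficients being `0` when a lower argument is negative. -/
theorem stmt3 {F : Type*} [Field F] [Fintype F] [DecidableEq F]
    (q : ℕ) (hq : Fintype.card F = q)
    (P Q : F × F) (hPQ : P ≠ Q) (i j : ℕ) (hi : i ≤ q + 1) (hj : j ≤ q + 1) :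
    ((Finset.univ.filter fun b : Option F → F => multPt b P = i ∧ multPt b Q = j).card : ℝ)
        / (q : ℝ) ^ (q + 1)
      = ((multinom q ((i : ℤ) - 1) ((j : ℤ) - 1) ((q : ℤ) - i - j + 2) : ℝ)
            * ((q : ℝ) - 2) ^ ((q : ℤ) - i - j + 2)
          + (multinom q i j ((q : ℤ) - i - j) : ℝ)
            * ((q : ℝ) - 1) * ((q : ℝ) - 2) ^ ((q : ℤ) - i - j))
        / (q : ℝ) ^ (q + 1) := by
  classical
  have hq2 : 2 ≤ q := by rw [← hq]; exact Fintype.one_lt_card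
  congr 1
  have hsetrw : (Finset.univ.filter fun b : Option F → F => multPt b P = i ∧ multPt b Q = j)
      = Finset.univ.filter fun b : Option F → F =>
          (univ.filter fun s => b s = cLine P s).card = i ∧
          (univ.filter fun s => b s = cLine Q s).card = j := by
    ext b
    simp only [mem_filter, mem_univ, true_and]
    have hmult : ∀ R : F × F, multPt b R = (univ.filter fun s => b s = cLine R s).card := by
      intro R
      unfold multPt
      apply congrArg
      apply Finset.filter_congr
      intro s _
      simp [memLine_iff]
    rw [hmult P, hmult Q]
  rw [hsetrw, split_count (slopeOf P Q) (cLine P) (cLine Q) (fun s => cLine_eq_iff hPQ s) i j]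
  have hcard' : Fintype.card {s : Option F // s ≠ slopeOf P Q} = q := by
    rw [Fintype.card_subtype_compl, Fintype.card_option, Fintype.card_subtype_eq, hq]
    omega
  rw [hcard', hq]
  have hA : ((if i = 0 ∨ j = 0 then 0 else
        q.choose (i-1) * (q - (i-1)).choose (j-1) * (q - 2) ^ (q - (i-1) - (j-1)) : ℕ) : ℝ)
      = (multinom q ((i : ℤ) - 1) ((j : ℤ) - 1) ((q : ℤ) - i - j + 2) : ℝ)
          * ((q : ℝ) - 2) ^ ((q : ℤ) - i - j + 2) := by
    by_cases hij : i = 0 ∨ j = 0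
    · rw [if_pos hij]
      have hm : multinom q ((i : ℤ) - 1) ((j : ℤ) - 1) ((q : ℤ) - i - j + 2) = 0 := by
        rw [multinom, if_neg]
        rintro ⟨h1, h2, -⟩
        rcases hij with h | h <;> omega
      rw [hm]
      simp
    · push_neg at hij
      have hi1 : 1 ≤ i := Nat.one_le_iff_ne_zero.2 hij.1
      have hj1 : 1 ≤ j := Nat.one_le_iff_ne_zero.2 hij.2
      rw [if_neg (by push_neg; exact hij)]
      have hck := cast_key q hq2 (i-1) (j-1)
      have e1 : ((i - 1 : ℕ) : ℤ) = (i : ℤ) - 1 := by omega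
      have e2 : ((j - 1 : ℕ) : ℤ) = (j : ℤ) - 1 := by omega
      have e3 : ((q : ℤ) - ((i - 1 : ℕ) : ℤ) - ((j - 1 : ℕ) : ℤ)) = (q : ℤ) - i - j + 2 := by
        omega
      rw [e3, e1, e2] at hck
      exact hck
  have hB : (((q - 1) * (q.choose i * (q - i).choose j * (q - 2) ^ (q - i - j)) : ℕ) : ℝ)
      = (multinom q (i : ℤ) (j : ℤ) ((q : ℤ) - i - j) : ℝ)
          * ((q : ℝ) - 1) * ((q : ℝ) - 2) ^ ((q : ℤ) - i - j) := by
    rw [Nat.cast_mul, cast_key q hq2 i j, Nat.cast_sub (by omega : 1 ≤ q)]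
    push_cast
    ring
  rw [Nat.cast_add, hA, hB]
end

section
/- For every minimal Besicovitch arrangement B in 𝔽_q², the number of points of multiplicity 1 satisfies x_1^B = Σ_{m=3}^{q+1} (m² − 2m)·x_m^B. -/
open Finset

section Aux
variable {F : Type*} [Field F] [Fintype F] [DecidableEq F]

lemma line_card (s : Option F) (c : F) :
    (univ.filter fun P : F × F => memLine s c P).card = Fintype.card F := by
  cases s with
  | none =>
    have h : (univ.filter fun P : F × F => memLine none c P)
        = univ.image (fun y : F => (c, y)) := by
      ext P
      simp only [mem_filter, mem_univ, true_and, mem_image]; simp only [memLine]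
      constructor
      · intro h; exact ⟨P.2, by rw [← h]⟩
      · rintro ⟨y, rfl⟩; rfl
    rw [h, card_image_of_injective _ (fun a b hab => by simpa using hab), card_univ]
  | some m =>
    have h : (univ.filter fun P : F × F => memLine (some m) c P)
        = univ.image (fun x : F => (x, m * x + c)) := by
      ext P
      simp only [mem_filter, mem_univ, true_and, mem_image]; simp only [memLine]
      constructor
      · intro h; exact ⟨P.1, by rw [← h]⟩
      · rintro ⟨x, rfl⟩; rfl
    rw [h, card_image_of_injective _ (fun a b hab => congrArg Prod.fst hab), card_univ]

lemma pair_card {i j : Option F} (hij : i ≠ j) (ci cj : F) :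
    (univ.filter fun P : F × F => memLine i ci P ∧ memLine j cj P).card = 1 := by
  rw [card_eq_one]
  match i, j with
  | none, none => exact absurd rfl hij
  | none, some m =>
    refine ⟨(ci, m * ci + cj), ?_⟩
    ext P
    simp only [mem_filter, mem_univ, true_and, mem_singleton]; simp only [memLine, Prod.ext_iff]
    constructor
    · rintro ⟨h1, h2⟩; exact ⟨h1, by rw [h2, h1]⟩
    · rintro ⟨h1, h2⟩; exact ⟨h1, by rw [h2, h1]⟩
  | some m, none =>
    refine ⟨(cj, m * cj + ci), ?_⟩
    ext P
    simp only [mem_filter, mem_univ, true_and, mem_singleton]; simp only [memLine, Prod.ext_iff]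
    constructor
    · rintro ⟨h1, h2⟩; exact ⟨h2, by rw [h1, h2]⟩
    · rintro ⟨h1, h2⟩; exact ⟨by rw [h2, h1], h1⟩
  | some m1, some m2 =>
    have hm : m1 - m2 ≠ 0 := sub_ne_zero.mpr (fun h => hij (by rw [h]))
    refine ⟨((cj - ci)/(m1 - m2), m1 * ((cj - ci)/(m1 - m2)) + ci), ?_⟩
    ext P
    simp only [mem_filter, mem_univ, true_and, mem_singleton]; simp only [memLine, Prod.ext_iff]
    constructor
    · rintro ⟨h1, h2⟩
      have hx : P.1 = (cj - ci)/(m1 - m2) := by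
        rw [eq_div_iff hm]
        linear_combination h2 - h1
      exact ⟨hx, by rw [h1, hx]⟩
    · rintro ⟨h1, h2⟩
      refine ⟨by rw [h2, h1], ?_⟩
      rw [h2, h1]
      field_simp
      ring

lemma sum_mult (b : Option F → F) :
    ∑ P : F × F, multPt b P = (Fintype.card F + 1) * Fintype.card F := by
  unfold multPt
  simp_rw [card_filter]
  rw [Finset.sum_comm]
  have h : ∀ i : Option F, (∑ P : F × F, if memLine i (b i) P then 1 else 0)
      = Fintype.card F := by
    intro i
    rw [← card_filter]
    exact line_card i (b i)
  rw [Finset.sum_congr rfl (fun i _ => h i), sum_const, card_univ, Fintype.card_option,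
    smul_eq_mul]

lemma sum_mult_pred (b : Option F → F) :
    ∑ P : F × F, (multPt b P * multPt b P - multPt b P)
      = (Fintype.card F + 1) * Fintype.card F := by
  have key : ∀ P : F × F, multPt b P * multPt b P - multPt b P
      = ∑ p ∈ (univ : Finset (Option F)).offDiag,
          (if memLine p.1 (b p.1) P ∧ memLine p.2 (b p.2) P then 1 else 0) := by
    intro P
    rw [← card_filter]
    rw [show ((univ : Finset (Option F)).offDiag.filter
        fun p => memLine p.1 (b p.1) P ∧ memLine p.2 (b p.2) P)
      = ((univ : Finset (Option F)).filter fun i => memLine i (b i) P).offDiag by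
        ext p
        simp only [mem_filter, mem_offDiag, mem_univ, true_and]
        tauto]
    rw [Finset.offDiag_card]
    rfl
  rw [Finset.sum_congr rfl (fun P _ => key P), Finset.sum_comm]
  have h : ∀ p ∈ (univ : Finset (Option F)).offDiag,
      (∑ P : F × F, if memLine p.1 (b p.1) P ∧ memLine p.2 (b p.2) P then 1 else 0) = 1 := by
    intro p hp
    rw [← card_filter]
    exact pair_card (mem_offDiag.mp hp).2.2 (b p.1) (b p.2)
  rw [Finset.sum_congr rfl h, sum_const, smul_eq_mul, mul_one, Finset.offDiag_card,
    card_univ, Fintype.card_option]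
  have e : (Fintype.card F + 1) * (Fintype.card F + 1)
      = (Fintype.card F + 1) * Fintype.card F + (Fintype.card F + 1) := by ring
  rw [e, Nat.add_sub_cancel]

lemma group_sum (b : Option F → F) (f : ℕ → ℕ) :
    ∑ P : F × F, f (multPt b P)
      = ∑ m ∈ Finset.range (Fintype.card F + 2), f m * xCount b m := by
  rw [← Finset.sum_fiberwise_of_maps_to (g := multPt b)
      (t := Finset.range (Fintype.card F + 2)) ?_ (fun P => f (multPt b P))]
  · refine Finset.sum_congr rfl fun m _ => ?_
    rw [xCount, Finset.sum_congr rfl (fun P hP => by rw [(Finset.mem_filter.mp hP).2]),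
      sum_const, smul_eq_mul, mul_comm]
  · intro P _
    have h : multPt b P ≤ Fintype.card F + 1 := by
      have := Finset.card_filter_le (univ : Finset (Option F))
        (fun i => memLine i (b i) P)
      simpa [multPt, Fintype.card_option] using this
    simp only [Finset.mem_range]
    omega

end Aux

/-- For every minimal Besicovitch arrangement `B` in `𝔽_q²`,
`x_1^B = ∑_{m=3}^{q+1} (m² − 2m)·x_m^B`. -/
theorem stmt5 {F : Type*} [Field F] [Fintype F] [DecidableEq F]
    (q : ℕ) (hq : Fintype.card F = q) (b : Option F → F) :
    xCount b 1 = ∑ m ∈ Finset.Icc 3 (q + 1), (m ^ 2 - 2 * m) * xCount b m := by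
  subst hq
  have hq2 : 2 ≤ Fintype.card F := Fintype.one_lt_card
  set q := Fintype.card F with hqdef
  have h1 : ∑ m ∈ range (q + 2), m * xCount b m = (q + 1) * q := by
    rw [← group_sum b (fun m => m)]
    exact sum_mult b
  have h2 : ∑ m ∈ range (q + 2), (m * m - m) * xCount b m = (q + 1) * q := by
    rw [← group_sum b (fun m => m * m - m)]
    exact sum_mult_pred b
  have hsplit : ∀ g : ℕ → ℕ, ∑ m ∈ range (q + 2), g m
      = g 0 + g 1 + g 2 + ∑ m ∈ Icc 3 (q + 1), g m := by
    intro g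
    rw [range_eq_Ico, ← Finset.sum_Ico_consecutive g (Nat.zero_le 3) (by omega),
      ← Finset.Ico_add_one_right_eq_Icc 3 (q + 1), ← range_eq_Ico]
    congr 1
    simp [Finset.sum_range_succ]
  rw [hsplit] at h1 h2
  have h3 : ∑ m ∈ Icc 3 (q + 1), (m * m - m) * xCount b m
      = ∑ m ∈ Icc 3 (q + 1), (m ^ 2 - 2 * m) * xCount b m
        + ∑ m ∈ Icc 3 (q + 1), m * xCount b m := by
    rw [← Finset.sum_add_distrib]
    refine Finset.sum_congr rfl fun m hm => ?_
    have h3m : 3 ≤ m := (Finset.mem_Icc.mp hm).1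
    have key : m * m - m = (m ^ 2 - 2 * m) + m := by
      have hle : 2 * m ≤ m * m := Nat.mul_le_mul_right m (by omega)
      rw [pow_two]
      generalize m * m = A at hle ⊢
      omega
    rw [key, add_mul]
  rw [h3] at h2
  set S1 := ∑ m ∈ Icc 3 (q + 1), m * xCount b m with hS1
  set S2 := ∑ m ∈ Icc 3 (q + 1), (m ^ 2 - 2 * m) * xCount b m with hS2
  set x1 := xCount b 1 with hx1
  set x2 := xCount b 2 with hx2
  simp only [Nat.zero_mul, Nat.one_mul] at h1 h2
  norm_num at h1 h2
  omega
end
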